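/- arXiv:2409.06529 — 2 statements merged into one kernel-verified Lean document; each statement's English description precedes it below -/
import Mathlib

section
/- For real numbers 0 < x < y, tanh(x)·tanh(y) < tanh((x+y)/2)², i.e., the function log∘tanh is strictly concave on positive reals in the sense of midpoint concavity. -/
/-- Strict midpoint concavity of `log ∘ tanh` on positive reals:
for `0 < x < y`, `tanh x * tanh y < tanh ((x+y)/2) ^ 2`. -/
theorem tanh_mul_tanh_lt_tanh_avg_sq (x y : ℝ) (hx : 0 < x) (hxy : x < y) :
    Real.tanh x * Real.tanh y < Real.tanh ((x + y) / 2) ^ 2 := by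
  set s : ℝ := (x + y) / 2 with hs
  have h1 : Real.cosh (x + y) = Real.cosh x * Real.cosh y + Real.sinh x * Real.sinh y :=
    Real.cosh_add x y
  have h2 : Real.cosh (y - x) = Real.cosh y * Real.cosh x - Real.sinh y * Real.sinh x :=
    Real.cosh_sub y x
  have h3 : Real.cosh (x + y) = 2 * Real.cosh s ^ 2 - 1 := by
    rw [show x + y = 2 * s by rw [hs]; ring, Real.cosh_two_mul]; linarith [Real.cosh_sq s]
  have h4 : Real.cosh s ^ 2 = Real.sinh s ^ 2 + 1 := Real.cosh_sq s
  have hB : 1 < Real.cosh (y - x) := by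
    rw [Real.one_lt_cosh]; intro h; linarith [sub_eq_zero.mp h]
  have hcx : 0 < Real.cosh x := Real.cosh_pos _
  have hcy : 0 < Real.cosh y := Real.cosh_pos _
  have hcs : 0 < Real.cosh s := Real.cosh_pos _
  have hA : 0 < Real.cosh (x + y) := Real.cosh_pos _
  rw [Real.tanh_eq_sinh_div_cosh, Real.tanh_eq_sinh_div_cosh, Real.tanh_eq_sinh_div_cosh,
    div_mul_div_comm, div_pow, div_lt_div_iff₀ (by positivity) (by positivity)]
  nlinarith [mul_pos hcx hcy, sq_nonneg (Real.cosh s), mul_pos hA (sub_pos.mpr hB)]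
end

section
/- Let T be a spherical triangle contained in an open hemisphere of the unit sphere, with side lengths a, b, c, semiperimeter s = (a+b+c)/2, and area S (equal to the angle excess α+β+γ−π). Then tan²(S/4) = tan(s/2)·tan((s−a)/2)·tan((s−b)/2)·tan((s−c)/2). -/
open Real

/-- Spherical (great-circle) distance between points of the unit sphere in `ℝ³`. -/
noncomputable def sdist (u v : EuclideanSpace ℝ (Fin 3)) : ℝ :=
  Real.arccos (inner ℝ u v : ℝ)

/-- The interior angle at the (middle) vertex `v` of the spherical triangle `uvw`,
defined via the spherical law of cosines. -/
noncomputable def sangle (u v w : EuclideanSpace ℝ (Fin 3)) : ℝ :=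
  Real.arccos ((Real.cos (sdist u w) - Real.cos (sdist v u) * Real.cos (sdist v w)) /
    (Real.sin (sdist v u) * Real.sin (sdist v w)))

private lemma my_sin_sq_half (x : ℝ) : Real.sin (x/2)^2 = (1 - Real.cos x)/2 := by
  have h := Real.sin_sq_add_cos_sq (x/2)
  have h2 : Real.cos (x/2)^2 = 1/2 + Real.cos (2*(x/2))/2 := Real.cos_sq (x/2)
  rw [show 2*(x/2) = x by ring] at h2
  linarith

private lemma my_cos_sq_half (x : ℝ) : Real.cos (x/2)^2 = (1 + Real.cos x)/2 := by
  have h2 : Real.cos (x/2)^2 = 1/2 + Real.cos (2*(x/2))/2 := Real.cos_sq (x/2)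
  rw [show 2*(x/2) = x by ring] at h2
  linarith


private lemma div_aux1 {x d e : ℝ} (hd : d ≠ 0) (h : d - x = 2*e) : (1 - x/d)/2 * d = e := by
  have hxd : x/d*d = x := div_mul_cancel₀ x hd
  linear_combination (1/2)*h - (1/2)*hxd

private lemma div_aux2 {x d e : ℝ} (hd : d ≠ 0) (h : d + x = 2*e) : (1 + x/d)/2 * d = e := by
  have hxd : x/d*d = x := div_mul_cancel₀ x hd
  linear_combination (1/2)*h + (1/2)*hxd


private lemma sdist_comm (u v : EuclideanSpace ℝ (Fin 3)) : sdist u v = sdist v u := by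
  rw [sdist, sdist, real_inner_comm]

private lemma sdist_triangle (u v w : EuclideanSpace ℝ (Fin 3))
    (hu : ‖u‖ = 1) (hv : ‖v‖ = 1) (hw : ‖w‖ = 1) :
    sdist u w ≤ sdist u v + sdist v w := by
  have hα1 : |(inner ℝ u v : ℝ)| ≤ 1 := by simpa [hu, hv] using abs_real_inner_le_norm u v
  have hβ1 : |(inner ℝ v w : ℝ)| ≤ 1 := by simpa [hv, hw] using abs_real_inner_le_norm v w
  rcases le_or_gt π (sdist u v + sdist v w) with hge | hlt
  · exact le_trans (Real.arccos_le_pi _) hge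
  · have hvv : (inner ℝ v v : ℝ) = 1 := by
      rw [real_inner_self_eq_norm_sq, hv]; norm_num
    have huu : (inner ℝ u u : ℝ) = 1 := by
      rw [real_inner_self_eq_norm_sq, hu]; norm_num
    have hww : (inner ℝ w w : ℝ) = 1 := by
      rw [real_inner_self_eq_norm_sq, hw]; norm_num
    have h1 : (inner ℝ (u - (inner ℝ u v : ℝ) • v) (w - (inner ℝ v w : ℝ) • v) : ℝ)
        = (inner ℝ u w : ℝ) - (inner ℝ u v : ℝ)*(inner ℝ v w : ℝ) := by
      simp only [inner_sub_left, inner_sub_right, real_inner_smul_left, real_inner_smul_right, hvv]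
      ring
    have h2 : ‖u - (inner ℝ u v : ℝ) • v‖^2 = 1 - (inner ℝ u v : ℝ)^2 := by
      rw [← real_inner_self_eq_norm_sq]
      simp only [inner_sub_left, inner_sub_right, real_inner_smul_left, real_inner_smul_right,
        hvv, huu]
      rw [real_inner_comm u v]
      ring
    have h3 : ‖w - (inner ℝ v w : ℝ) • v‖^2 = 1 - (inner ℝ v w : ℝ)^2 := by
      rw [← real_inner_self_eq_norm_sq]
      simp only [inner_sub_left, inner_sub_right, real_inner_smul_left, real_inner_smul_right,
        hvv, hww]
      rw [real_inner_comm w v]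
      ring
    have hcs := abs_real_inner_le_norm (u - (inner ℝ u v : ℝ) • v) (w - (inner ℝ v w : ℝ) • v)
    have hcs2 := pow_le_pow_left₀ (abs_nonneg _) hcs 2
    rw [sq_abs, mul_pow, h1, h2, h3] at hcs2
    have hA := Real.arccos_nonneg (inner ℝ u v : ℝ)
    have hB := Real.arccos_nonneg (inner ℝ v w : ℝ)
    have hcos : Real.cos (sdist u v + sdist v w) = (inner ℝ u v : ℝ)*(inner ℝ v w : ℝ)
        - Real.sqrt (1-(inner ℝ u v : ℝ)^2) * Real.sqrt (1-(inner ℝ v w : ℝ)^2) := by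
      rw [sdist, sdist, Real.cos_add,
        Real.cos_arccos (by linarith [abs_le.mp hα1]) (by linarith [abs_le.mp hα1]),
        Real.cos_arccos (by linarith [abs_le.mp hβ1]) (by linarith [abs_le.mp hβ1]),
        Real.sin_arccos, Real.sin_arccos]
    have hsq : (Real.sqrt (1-(inner ℝ u v : ℝ)^2) * Real.sqrt (1-(inner ℝ v w : ℝ)^2))^2
        = (1-(inner ℝ u v : ℝ)^2)*(1-(inner ℝ v w : ℝ)^2) := by
      rw [mul_pow, Real.sq_sqrt (by nlinarith [abs_le.mp hα1]), Real.sq_sqrt (by nlinarith [abs_le.mp hβ1])]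
    have hsn : 0 ≤ Real.sqrt (1-(inner ℝ u v : ℝ)^2) * Real.sqrt (1-(inner ℝ v w : ℝ)^2) :=
      mul_nonneg (Real.sqrt_nonneg _) (Real.sqrt_nonneg _)
    have hγge : Real.cos (sdist u v + sdist v w) ≤ (inner ℝ u w : ℝ) := by
      rw [hcos]; nlinarith [hcs2, hsq, hsn]
    have h5 := Real.monotone_arcsin hγge
    have h6 : Real.arccos (inner ℝ u w : ℝ) ≤ Real.arccos (Real.cos (sdist u v + sdist v w)) := by
      rw [Real.arccos_eq_pi_div_two_sub_arcsin, Real.arccos_eq_pi_div_two_sub_arcsin]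
      linarith
    rw [Real.arccos_cos (by positivity) hlt.le] at h6
    exact h6

set_option maxHeartbeats 1000000 in
private lemma lhuilier_core (q r t A B C : ℝ)
    (hq : 0 < q) (hr : 0 < r) (ht : 0 < t) (hp : q + r + t < π/2)
    (hA : A = Real.arccos ((Real.cos (2*(q+t)) - Real.cos (2*(q+r)) * Real.cos (2*(r+t))) /
      (Real.sin (2*(q+r)) * Real.sin (2*(r+t)))))
    (hB : B = Real.arccos ((Real.cos (2*(q+r)) - Real.cos (2*(r+t)) * Real.cos (2*(q+t))) /
      (Real.sin (2*(r+t)) * Real.sin (2*(q+t)))))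
    (hC : C = Real.arccos ((Real.cos (2*(r+t)) - Real.cos (2*(q+t)) * Real.cos (2*(q+r))) /
      (Real.sin (2*(q+t)) * Real.sin (2*(q+r))))) :
    Real.tan ((A+B+C-π)/4)^2 = Real.tan (q+r+t) * Real.tan q * Real.tan r * Real.tan t := by
  have hpi := Real.pi_pos
  -- positivity of sines
  have hs2q : 0 < Real.sin (2*q) := Real.sin_pos_of_pos_of_lt_pi (by linarith) (by linarith)
  have hs2r : 0 < Real.sin (2*r) := Real.sin_pos_of_pos_of_lt_pi (by linarith) (by linarith)
  have hs2t : 0 < Real.sin (2*t) := Real.sin_pos_of_pos_of_lt_pi (by linarith) (by linarith)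
  have hsqr : 0 < Real.sin (2*(q+r)) := Real.sin_pos_of_pos_of_lt_pi (by linarith) (by linarith)
  have hsqt : 0 < Real.sin (2*(q+t)) := Real.sin_pos_of_pos_of_lt_pi (by linarith) (by linarith)
  have hsrt : 0 < Real.sin (2*(r+t)) := Real.sin_pos_of_pos_of_lt_pi (by linarith) (by linarith)
  have hs2p : 0 < Real.sin (2*(q+r+t)) := Real.sin_pos_of_pos_of_lt_pi (by linarith) (by linarith)
  have hsq1 : 0 < Real.sin q := Real.sin_pos_of_pos_of_lt_pi (by linarith) (by linarith)
  have hsr1 : 0 < Real.sin r := Real.sin_pos_of_pos_of_lt_pi (by linarith) (by linarith)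
  have hst1 : 0 < Real.sin t := Real.sin_pos_of_pos_of_lt_pi (by linarith) (by linarith)
  have hsp1 : 0 < Real.sin (q+r+t) := Real.sin_pos_of_pos_of_lt_pi (by linarith) (by linarith)
  have hcq1 : 0 < Real.cos q := Real.cos_pos_of_mem_Ioo ⟨by linarith, by linarith⟩
  have hcr1 : 0 < Real.cos r := Real.cos_pos_of_mem_Ioo ⟨by linarith, by linarith⟩
  have hct1 : 0 < Real.cos t := Real.cos_pos_of_mem_Ioo ⟨by linarith, by linarith⟩
  have hcp1 : 0 < Real.cos (q+r+t) := Real.cos_pos_of_mem_Ioo ⟨by linarith, by linarith⟩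
  have hsgqt : 0 < Real.sin (q+t) := Real.sin_pos_of_pos_of_lt_pi (by linarith) (by linarith)
  have hsgqr : 0 < Real.sin (q+r) := Real.sin_pos_of_pos_of_lt_pi (by linarith) (by linarith)
  have hsgrt : 0 < Real.sin (r+t) := Real.sin_pos_of_pos_of_lt_pi (by linarith) (by linarith)
  -- Pythagoras
  have hpyq : Real.sin q ^ 2 + Real.cos q ^ 2 = 1 := Real.sin_sq_add_cos_sq q
  have hpyr : Real.sin r ^ 2 + Real.cos r ^ 2 = 1 := Real.sin_sq_add_cos_sq r
  have hpyt : Real.sin t ^ 2 + Real.cos t ^ 2 = 1 := Real.sin_sq_add_cos_sq t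
  -- six product-to-sum identities
  have hA1 : Real.sin (2*(q+r)) * Real.sin (2*(r+t)) - Real.cos (2*(q+t))
      + Real.cos (2*(q+r)) * Real.cos (2*(r+t)) = 2*(Real.sin (2*q) * Real.sin (2*t)) := by
    simp only [two_mul, Real.sin_add, Real.cos_add]
    linear_combination ((-1)*Real.cos t^2 + Real.sin t^2 + Real.cos r^4*Real.cos t^2 + (-1)*Real.cos r^4*Real.sin t^2 + (2)*Real.sin r^2*Real.cos r^2*Real.cos t^2 + (-2)*Real.sin r^2*Real.cos r^2*Real.sin t^2 + Real.sin r^4*Real.cos t^2 + (-1)*Real.sin r^4*Real.sin t^2) * hpyq + (Real.cos t^2 + (-1)*Real.sin t^2 + Real.cos r^2*Real.cos t^2 + (-1)*Real.cos r^2*Real.sin t^2 + Real.sin r^2*Real.cos t^2 + (-1)*Real.sin r^2*Real.sin t^2 + (4)*Real.sin q*Real.cos q*Real.sin t*Real.cos t + (4)*Real.sin q*Real.cos q*Real.cos r^2*Real.sin t*Real.cos t + (4)*Real.sin q*Real.cos q*Real.sin r^2*Real.sin t*Real.cos t + (-2)*Real.sin q^2*Real.cos t^2 + (2)*Real.sin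 q^2*Real.sin t^2 + (-2)*Real.sin q^2*Real.cos r^2*Real.cos t^2 + (2)*Real.sin q^2*Real.cos r^2*Real.sin t^2 + (-2)*Real.sin q^2*Real.sin r^2*Real.cos t^2 + (2)*Real.sin q^2*Real.sin r^2*Real.sin t^2) * hpyr
  have hA2 : Real.sin (2*(q+r)) * Real.sin (2*(r+t)) + Real.cos (2*(q+t))
      - Real.cos (2*(q+r)) * Real.cos (2*(r+t)) = 2*(Real.sin (2*(q+r+t)) * Real.sin (2*r)) := by
    simp only [two_mul, Real.sin_add, Real.cos_add]
    linear_combination (Real.cos t^2 + (-1)*Real.sin t^2 + (-1)*Real.cos r^4*Real.cos t^2 + Real.cos r^4*Real.sin t^2 + (-2)*Real.sin r^2*Real.cos r^2*Real.cos t^2 + (2)*Real.sin r^2*Real.cos r^2*Real.sin t^2 + (-1)*Real.sin r^4*Real.cos t^2 + Real.sin r^4*Real.sin t^2) * hpyq + ((-1)*Real.cos t^2 + Real.sin t^2 + (-1)*Real.cos r^2*Real.cos t^2 + Real.cos r^2*Real.sin t^2 + (-1)*Real.sin r^2*Real.cos t^2 + Real.sin r^2*Real.sin t^2 + (4)*Real.sin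 q*Real.cos q*Real.sin t*Real.cos t + (4)*Real.sin q*Real.cos q*Real.cos r^2*Real.sin t*Real.cos t + (4)*Real.sin q*Real.cos q*Real.sin r^2*Real.sin t*Real.cos t + (2)*Real.sin q^2*Real.cos t^2 + (-2)*Real.sin q^2*Real.sin t^2 + (2)*Real.sin q^2*Real.cos r^2*Real.cos t^2 + (-2)*Real.sin q^2*Real.cos r^2*Real.sin t^2 + (2)*Real.sin q^2*Real.sin r^2*Real.cos t^2 + (-2)*Real.sin q^2*Real.sin r^2*Real.sin t^2) * hpyr
  have hB1 : Real.sin (2*(r+t)) * Real.sin (2*(q+t)) - Real.cos (2*(q+r))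
      + Real.cos (2*(r+t)) * Real.cos (2*(q+t)) = 2*(Real.sin (2*q) * Real.sin (2*r)) := by
    simp only [two_mul, Real.sin_add, Real.cos_add]
    linear_combination ((-1)*Real.cos r^2 + Real.cos r^2*Real.cos t^4 + (2)*Real.cos r^2*Real.sin t^2*Real.cos t^2 + Real.cos r^2*Real.sin t^4 + Real.sin r^2 + (-1)*Real.sin r^2*Real.cos t^4 + (-2)*Real.sin r^2*Real.sin t^2*Real.cos t^2 + (-1)*Real.sin r^2*Real.sin t^4) * hpyq + ((-1) + Real.cos t^4 + (2)*Real.sin t^2*Real.cos t^2 + Real.sin t^4 + (2)*Real.sin q^2 + (-2)*Real.sin q^2*Real.cos t^4 + (-4)*Real.sin q^2*Real.sin t^2*Real.cos t^2 + (-2)*Real.sin q^2*Real.sin t^4) * hpyr + ((1) + Real.cos t^2 + Real.sin t^2 + (-2)*Real.sin r^2 + (-2)*Real.sin r^2*Real.cos t^2 + (-2)*Real.sin r^2*Real.sin t^2 + (4)*Real.sin q*Real.cos q*Real.sin r*Real.cos r + (4)*Real.sin q*Real.cos q*Real.sin r*Real.cos r*Real.cos t^2 + (4)*Real.sin q*Real.cos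 q*Real.sin r*Real.cos r*Real.sin t^2 + (-2)*Real.sin q^2 + (-2)*Real.sin q^2*Real.cos t^2 + (-2)*Real.sin q^2*Real.sin t^2 + (4)*Real.sin q^2*Real.sin r^2 + (4)*Real.sin q^2*Real.sin r^2*Real.cos t^2 + (4)*Real.sin q^2*Real.sin r^2*Real.sin t^2) * hpyt
  have hB2 : Real.sin (2*(r+t)) * Real.sin (2*(q+t)) + Real.cos (2*(q+r))
      - Real.cos (2*(r+t)) * Real.cos (2*(q+t)) = 2*(Real.sin (2*(q+r+t)) * Real.sin (2*t)) := by
    simp only [two_mul, Real.sin_add, Real.cos_add]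
    linear_combination (Real.cos r^2 + (-1)*Real.cos r^2*Real.cos t^4 + (-2)*Real.cos r^2*Real.sin t^2*Real.cos t^2 + (-1)*Real.cos r^2*Real.sin t^4 + (-1)*Real.sin r^2 + Real.sin r^2*Real.cos t^4 + (2)*Real.sin r^2*Real.sin t^2*Real.cos t^2 + Real.sin r^2*Real.sin t^4) * hpyq + ((1) + (-1)*Real.cos t^4 + (-2)*Real.sin t^2*Real.cos t^2 + (-1)*Real.sin t^4 + (-2)*Real.sin q^2 + (2)*Real.sin q^2*Real.cos t^4 + (4)*Real.sin q^2*Real.sin t^2*Real.cos t^2 + (2)*Real.sin q^2*Real.sin t^4) * hpyr + ((-1) + (-1)*Real.cos t^2 + (-1)*Real.sin t^2 + (2)*Real.sin r^2 + (2)*Real.sin r^2*Real.cos t^2 + (2)*Real.sin r^2*Real.sin t^2 + (4)*Real.sin q*Real.cos q*Real.sin r*Real.cos r + (4)*Real.sin q*Real.cos q*Real.sin r*Real.cos r*Real.cos t^2 + (4)*Real.sin q*Real.cos q*Real.sin r*Real.cos r*Real.sin t^2 + (2)*Real.sin q^2 + (2)*Real.sin q^2*Real.cos t^2 + (2)*Real.sin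 q^2*Real.sin t^2 + (-4)*Real.sin q^2*Real.sin r^2 + (-4)*Real.sin q^2*Real.sin r^2*Real.cos t^2 + (-4)*Real.sin q^2*Real.sin r^2*Real.sin t^2) * hpyt
  have hC1 : Real.sin (2*(q+t)) * Real.sin (2*(q+r)) - Real.cos (2*(r+t))
      + Real.cos (2*(q+t)) * Real.cos (2*(q+r)) = 2*(Real.sin (2*r) * Real.sin (2*t)) := by
    simp only [two_mul, Real.sin_add, Real.cos_add]
    linear_combination (Real.cos r^2*Real.cos t^2 + (-1)*Real.cos r^2*Real.sin t^2 + (4)*Real.sin r*Real.cos r*Real.sin t*Real.cos t + (-1)*Real.sin r^2*Real.cos t^2 + Real.sin r^2*Real.sin t^2 + Real.cos q^2*Real.cos r^2*Real.cos t^2 + (-1)*Real.cos q^2*Real.cos r^2*Real.sin t^2 + (4)*Real.cos q^2*Real.sin r*Real.cos r*Real.sin t*Real.cos t + (-1)*Real.cos q^2*Real.sin r^2*Real.cos t^2 + Real.cos q^2*Real.sin r^2*Real.sin t^2 + Real.sin q^2*Real.cos r^2*Real.cos t^2 + (-1)*Real.sin q^2*Real.cos r^2*Real.sin t^2 + (4)*Real.sin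 q^2*Real.sin r*Real.cos r*Real.sin t*Real.cos t + (-1)*Real.sin q^2*Real.sin r^2*Real.cos t^2 + Real.sin q^2*Real.sin r^2*Real.sin t^2) * hpyq
  have hC2 : Real.sin (2*(q+t)) * Real.sin (2*(q+r)) + Real.cos (2*(r+t))
      - Real.cos (2*(q+t)) * Real.cos (2*(q+r)) = 2*(Real.sin (2*(q+r+t)) * Real.sin (2*q)) := by
    simp only [two_mul, Real.sin_add, Real.cos_add]
    linear_combination ((-1)*Real.cos r^2*Real.cos t^2 + Real.cos r^2*Real.sin t^2 + (4)*Real.sin r*Real.cos r*Real.sin t*Real.cos t + Real.sin r^2*Real.cos t^2 + (-1)*Real.sin r^2*Real.sin t^2 + (-1)*Real.cos q^2*Real.cos r^2*Real.cos t^2 + Real.cos q^2*Real.cos r^2*Real.sin t^2 + (4)*Real.cos q^2*Real.sin r*Real.cos r*Real.sin t*Real.cos t + Real.cos q^2*Real.sin r^2*Real.cos t^2 + (-1)*Real.cos q^2*Real.sin r^2*Real.sin t^2 + (-1)*Real.sin q^2*Real.cos r^2*Real.cos t^2 + Real.sin q^2*Real.cos r^2*Real.sin t^2 + (4)*Real.sin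 q^2*Real.sin r*Real.cos r*Real.sin t*Real.cos t + Real.sin q^2*Real.sin r^2*Real.cos t^2 + (-1)*Real.sin q^2*Real.sin r^2*Real.sin t^2) * hpyq
  -- denominators
  have hden1 : (0:ℝ) < Real.sin (2*(q+r)) * Real.sin (2*(r+t)) := mul_pos hsqr hsrt
  have hden2 : (0:ℝ) < Real.sin (2*(r+t)) * Real.sin (2*(q+t)) := mul_pos hsrt hsqt
  have hden3 : (0:ℝ) < Real.sin (2*(q+t)) * Real.sin (2*(q+r)) := mul_pos hsqt hsqr
  -- ratio bounds
  have hRa2 : (Real.cos (2*(q+t)) - Real.cos (2*(q+r)) * Real.cos (2*(r+t))) /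
      (Real.sin (2*(q+r)) * Real.sin (2*(r+t))) < 1 := by
    rw [div_lt_one hden1]; linarith [hA1, mul_pos hs2q hs2t]
  have hRa1 : -1 < (Real.cos (2*(q+t)) - Real.cos (2*(q+r)) * Real.cos (2*(r+t))) /
      (Real.sin (2*(q+r)) * Real.sin (2*(r+t))) := by
    rw [lt_div_iff₀ hden1]; linarith [hA2, mul_pos hs2p hs2r]
  have hRb2 : (Real.cos (2*(q+r)) - Real.cos (2*(r+t)) * Real.cos (2*(q+t))) /
      (Real.sin (2*(r+t)) * Real.sin (2*(q+t))) < 1 := by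
    rw [div_lt_one hden2]; linarith [hB1, mul_pos hs2q hs2r]
  have hRb1 : -1 < (Real.cos (2*(q+r)) - Real.cos (2*(r+t)) * Real.cos (2*(q+t))) /
      (Real.sin (2*(r+t)) * Real.sin (2*(q+t))) := by
    rw [lt_div_iff₀ hden2]; linarith [hB2, mul_pos hs2p hs2t]
  have hRc2 : (Real.cos (2*(r+t)) - Real.cos (2*(q+t)) * Real.cos (2*(q+r))) /
      (Real.sin (2*(q+t)) * Real.sin (2*(q+r))) < 1 := by
    rw [div_lt_one hden3]; linarith [hC1, mul_pos hs2r hs2t]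
  have hRc1 : -1 < (Real.cos (2*(r+t)) - Real.cos (2*(q+t)) * Real.cos (2*(q+r))) /
      (Real.sin (2*(q+t)) * Real.sin (2*(q+r))) := by
    rw [lt_div_iff₀ hden3]; linarith [hC2, mul_pos hs2p hs2q]
  -- cosines of the angles
  have hcosA : Real.cos A = (Real.cos (2*(q+t)) - Real.cos (2*(q+r)) * Real.cos (2*(r+t))) /
      (Real.sin (2*(q+r)) * Real.sin (2*(r+t))) := by
    rw [hA]; exact Real.cos_arccos (by linarith) (by linarith)
  have hcosB : Real.cos B = (Real.cos (2*(q+r)) - Real.cos (2*(r+t)) * Real.cos (2*(q+t))) /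
      (Real.sin (2*(r+t)) * Real.sin (2*(q+t))) := by
    rw [hB]; exact Real.cos_arccos (by linarith) (by linarith)
  have hcosC : Real.cos C = (Real.cos (2*(r+t)) - Real.cos (2*(q+t)) * Real.cos (2*(q+r))) /
      (Real.sin (2*(q+t)) * Real.sin (2*(q+r))) := by
    rw [hC]; exact Real.cos_arccos (by linarith) (by linarith)
  have hA0 : 0 ≤ A := hA ▸ Real.arccos_nonneg _
  have hB0 : 0 ≤ B := hB ▸ Real.arccos_nonneg _
  have hC0 : 0 ≤ C := hC ▸ Real.arccos_nonneg _
  have hAp : A ≤ π := hA ▸ Real.arccos_le_pi _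
  have hBp : B ≤ π := hB ▸ Real.arccos_le_pi _
  have hCp : C ≤ π := hC ▸ Real.arccos_le_pi _
  have hAlt : A < π := by
    rcases lt_or_eq_of_le hAp with h | h
    · exact h
    · exfalso; rw [h, Real.cos_pi] at hcosA; linarith
  have hBlt : B < π := by
    rcases lt_or_eq_of_le hBp with h | h
    · exact h
    · exfalso; rw [h, Real.cos_pi] at hcosB; linarith
  have hClt : C < π := by
    rcases lt_or_eq_of_le hCp with h | h
    · exact h
    · exfalso; rw [h, Real.cos_pi] at hcosC; linarith
  -- half-angle squares
  have hsa2 : Real.sin (A/2)^2 * (Real.sin (2*(q+r)) * Real.sin (2*(r+t)))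
      = Real.sin (2*q) * Real.sin (2*t) := by
    rw [my_sin_sq_half, hcosA]; exact div_aux1 hden1.ne' (by linear_combination hA1)
  have hca2 : Real.cos (A/2)^2 * (Real.sin (2*(q+r)) * Real.sin (2*(r+t)))
      = Real.sin (2*(q+r+t)) * Real.sin (2*r) := by
    rw [my_cos_sq_half, hcosA]; exact div_aux2 hden1.ne' (by linear_combination hA2)
  have hsb2 : Real.sin (B/2)^2 * (Real.sin (2*(r+t)) * Real.sin (2*(q+t)))
      = Real.sin (2*q) * Real.sin (2*r) := by
    rw [my_sin_sq_half, hcosB]; exact div_aux1 hden2.ne' (by linear_combination hB1)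
  have hcb2 : Real.cos (B/2)^2 * (Real.sin (2*(r+t)) * Real.sin (2*(q+t)))
      = Real.sin (2*(q+r+t)) * Real.sin (2*t) := by
    rw [my_cos_sq_half, hcosB]; exact div_aux2 hden2.ne' (by linear_combination hB2)
  have hsc2 : Real.sin (C/2)^2 * (Real.sin (2*(q+t)) * Real.sin (2*(q+r)))
      = Real.sin (2*r) * Real.sin (2*t) := by
    rw [my_sin_sq_half, hcosC]; exact div_aux1 hden3.ne' (by linear_combination hC1)
  have hcc2 : Real.cos (C/2)^2 * (Real.sin (2*(q+t)) * Real.sin (2*(q+r)))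
      = Real.sin (2*(q+r+t)) * Real.sin (2*q) := by
    rw [my_cos_sq_half, hcosC]; exact div_aux2 hden3.ne' (by linear_combination hC2)
  -- nonnegativity of half-angle sin/cos
  have hsA0 : 0 ≤ Real.sin (A/2) := Real.sin_nonneg_of_nonneg_of_le_pi (by linarith) (by linarith)
  have hsB0 : 0 ≤ Real.sin (B/2) := Real.sin_nonneg_of_nonneg_of_le_pi (by linarith) (by linarith)
  have hsC0 : 0 ≤ Real.sin (C/2) := Real.sin_nonneg_of_nonneg_of_le_pi (by linarith) (by linarith)
  have hcA0 : 0 ≤ Real.cos (A/2) := Real.cos_nonneg_of_mem_Icc ⟨by linarith, by linarith⟩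
  have hcB0 : 0 ≤ Real.cos (B/2) := Real.cos_nonneg_of_mem_Icc ⟨by linarith, by linarith⟩
  have hcC0 : 0 ≤ Real.cos (C/2) := Real.cos_nonneg_of_mem_Icc ⟨by linarith, by linarith⟩
  have hK : (0:ℝ) < Real.sin (2*(r+t)) * Real.sin (2*(q+t)) * Real.sin (2*(q+r)) :=
    mul_pos (mul_pos hsrt hsqt) hsqr
  -- the four products
  have hT1 : Real.sin (A/2) * Real.cos (B/2) * Real.cos (C/2) *
      (Real.sin (2*(r+t)) * Real.sin (2*(q+t)) * Real.sin (2*(q+r)))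
      = Real.sin (2*(q+r+t)) * Real.sin (2*q) * Real.sin (2*t) := by
    have e : (Real.sin (A/2) * Real.cos (B/2) * Real.cos (C/2) *
        (Real.sin (2*(r+t)) * Real.sin (2*(q+t)) * Real.sin (2*(q+r))))^2
        = (Real.sin (A/2)^2 * (Real.sin (2*(q+r)) * Real.sin (2*(r+t))))
          * ((Real.cos (B/2)^2 * (Real.sin (2*(r+t)) * Real.sin (2*(q+t))))
          * (Real.cos (C/2)^2 * (Real.sin (2*(q+t)) * Real.sin (2*(q+r))))) := by ring
    rw [hsa2, hcb2, hcc2] at e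
    have e2 : (Real.sin (A/2) * Real.cos (B/2) * Real.cos (C/2) *
        (Real.sin (2*(r+t)) * Real.sin (2*(q+t)) * Real.sin (2*(q+r))))^2
        = (Real.sin (2*(q+r+t)) * Real.sin (2*q) * Real.sin (2*t))^2 := by rw [e]; ring
    have hn1 : 0 ≤ Real.sin (A/2) * Real.cos (B/2) * Real.cos (C/2) *
        (Real.sin (2*(r+t)) * Real.sin (2*(q+t)) * Real.sin (2*(q+r))) :=
      mul_nonneg (mul_nonneg (mul_nonneg hsA0 hcB0) hcC0) hK.le
    have hn2 : 0 ≤ Real.sin (2*(q+r+t)) * Real.sin (2*q) * Real.sin (2*t) :=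
      (mul_pos (mul_pos hs2p hs2q) hs2t).le
    have := congrArg Real.sqrt e2
    rwa [Real.sqrt_sq hn1, Real.sqrt_sq hn2] at this
  have hT2 : Real.cos (A/2) * Real.sin (B/2) * Real.cos (C/2) *
      (Real.sin (2*(r+t)) * Real.sin (2*(q+t)) * Real.sin (2*(q+r)))
      = Real.sin (2*(q+r+t)) * Real.sin (2*q) * Real.sin (2*r) := by
    have e : (Real.cos (A/2) * Real.sin (B/2) * Real.cos (C/2) *
        (Real.sin (2*(r+t)) * Real.sin (2*(q+t)) * Real.sin (2*(q+r))))^2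
        = (Real.cos (A/2)^2 * (Real.sin (2*(q+r)) * Real.sin (2*(r+t))))
          * ((Real.sin (B/2)^2 * (Real.sin (2*(r+t)) * Real.sin (2*(q+t))))
          * (Real.cos (C/2)^2 * (Real.sin (2*(q+t)) * Real.sin (2*(q+r))))) := by ring
    rw [hca2, hsb2, hcc2] at e
    have e2 : (Real.cos (A/2) * Real.sin (B/2) * Real.cos (C/2) *
        (Real.sin (2*(r+t)) * Real.sin (2*(q+t)) * Real.sin (2*(q+r))))^2
        = (Real.sin (2*(q+r+t)) * Real.sin (2*q) * Real.sin (2*r))^2 := by rw [e]; ring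
    have hn1 : 0 ≤ Real.cos (A/2) * Real.sin (B/2) * Real.cos (C/2) *
        (Real.sin (2*(r+t)) * Real.sin (2*(q+t)) * Real.sin (2*(q+r))) :=
      mul_nonneg (mul_nonneg (mul_nonneg hcA0 hsB0) hcC0) hK.le
    have hn2 : 0 ≤ Real.sin (2*(q+r+t)) * Real.sin (2*q) * Real.sin (2*r) :=
      (mul_pos (mul_pos hs2p hs2q) hs2r).le
    have := congrArg Real.sqrt e2
    rwa [Real.sqrt_sq hn1, Real.sqrt_sq hn2] at this
  have hT3 : Real.cos (A/2) * Real.cos (B/2) * Real.sin (C/2) *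
      (Real.sin (2*(r+t)) * Real.sin (2*(q+t)) * Real.sin (2*(q+r)))
      = Real.sin (2*(q+r+t)) * Real.sin (2*r) * Real.sin (2*t) := by
    have e : (Real.cos (A/2) * Real.cos (B/2) * Real.sin (C/2) *
        (Real.sin (2*(r+t)) * Real.sin (2*(q+t)) * Real.sin (2*(q+r))))^2
        = (Real.cos (A/2)^2 * (Real.sin (2*(q+r)) * Real.sin (2*(r+t))))
          * ((Real.cos (B/2)^2 * (Real.sin (2*(r+t)) * Real.sin (2*(q+t))))
          * (Real.sin (C/2)^2 * (Real.sin (2*(q+t)) * Real.sin (2*(q+r))))) := by ring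
    rw [hca2, hcb2, hsc2] at e
    have e2 : (Real.cos (A/2) * Real.cos (B/2) * Real.sin (C/2) *
        (Real.sin (2*(r+t)) * Real.sin (2*(q+t)) * Real.sin (2*(q+r))))^2
        = (Real.sin (2*(q+r+t)) * Real.sin (2*r) * Real.sin (2*t))^2 := by rw [e]; ring
    have hn1 : 0 ≤ Real.cos (A/2) * Real.cos (B/2) * Real.sin (C/2) *
        (Real.sin (2*(r+t)) * Real.sin (2*(q+t)) * Real.sin (2*(q+r))) :=
      mul_nonneg (mul_nonneg (mul_nonneg hcA0 hcB0) hsC0) hK.le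
    have hn2 : 0 ≤ Real.sin (2*(q+r+t)) * Real.sin (2*r) * Real.sin (2*t) :=
      (mul_pos (mul_pos hs2p hs2r) hs2t).le
    have := congrArg Real.sqrt e2
    rwa [Real.sqrt_sq hn1, Real.sqrt_sq hn2] at this
  have hT4 : Real.sin (A/2) * Real.sin (B/2) * Real.sin (C/2) *
      (Real.sin (2*(r+t)) * Real.sin (2*(q+t)) * Real.sin (2*(q+r)))
      = Real.sin (2*q) * Real.sin (2*r) * Real.sin (2*t) := by
    have e : (Real.sin (A/2) * Real.sin (B/2) * Real.sin (C/2) *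
        (Real.sin (2*(r+t)) * Real.sin (2*(q+t)) * Real.sin (2*(q+r))))^2
        = (Real.sin (A/2)^2 * (Real.sin (2*(q+r)) * Real.sin (2*(r+t))))
          * ((Real.sin (B/2)^2 * (Real.sin (2*(r+t)) * Real.sin (2*(q+t))))
          * (Real.sin (C/2)^2 * (Real.sin (2*(q+t)) * Real.sin (2*(q+r))))) := by ring
    rw [hsa2, hsb2, hsc2] at e
    have e2 : (Real.sin (A/2) * Real.sin (B/2) * Real.sin (C/2) *
        (Real.sin (2*(r+t)) * Real.sin (2*(q+t)) * Real.sin (2*(q+r))))^2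
        = (Real.sin (2*q) * Real.sin (2*r) * Real.sin (2*t))^2 := by rw [e]; ring
    have hn1 : 0 ≤ Real.sin (A/2) * Real.sin (B/2) * Real.sin (C/2) *
        (Real.sin (2*(r+t)) * Real.sin (2*(q+t)) * Real.sin (2*(q+r))) :=
      mul_nonneg (mul_nonneg (mul_nonneg hsA0 hsB0) hsC0) hK.le
    have hn2 : 0 ≤ Real.sin (2*q) * Real.sin (2*r) * Real.sin (2*t) :=
      (mul_pos (mul_pos hs2q hs2r) hs2t).le
    have := congrArg Real.sqrt e2
    rwa [Real.sqrt_sq hn1, Real.sqrt_sq hn2] at this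
  -- sin of half-sum times K
  have hW : Real.sin ((A+B+C)/2) * (Real.sin (2*(r+t)) * Real.sin (2*(q+t)) * Real.sin (2*(q+r)))
      = Real.sin (2*(q+r+t)) * Real.sin (2*q) * Real.sin (2*t)
        + Real.sin (2*(q+r+t)) * Real.sin (2*q) * Real.sin (2*r)
        + Real.sin (2*(q+r+t)) * Real.sin (2*r) * Real.sin (2*t)
        - Real.sin (2*q) * Real.sin (2*r) * Real.sin (2*t) := by
    have e : Real.sin ((A+B+C)/2)
        = Real.sin (A/2) * Real.cos (B/2) * Real.cos (C/2)
        + Real.cos (A/2) * Real.sin (B/2) * Real.cos (C/2)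
        + Real.cos (A/2) * Real.cos (B/2) * Real.sin (C/2)
        - Real.sin (A/2) * Real.sin (B/2) * Real.sin (C/2) := by
      rw [show (A+B+C)/2 = (A/2 + B/2) + C/2 by ring, Real.sin_add, Real.sin_add, Real.cos_add]
      ring
    calc Real.sin ((A+B+C)/2) * (Real.sin (2*(r+t)) * Real.sin (2*(q+t)) * Real.sin (2*(q+r)))
        = Real.sin (A/2) * Real.cos (B/2) * Real.cos (C/2) *
            (Real.sin (2*(r+t)) * Real.sin (2*(q+t)) * Real.sin (2*(q+r)))
          + Real.cos (A/2) * Real.sin (B/2) * Real.cos (C/2) *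
            (Real.sin (2*(r+t)) * Real.sin (2*(q+t)) * Real.sin (2*(q+r)))
          + Real.cos (A/2) * Real.cos (B/2) * Real.sin (C/2) *
            (Real.sin (2*(r+t)) * Real.sin (2*(q+t)) * Real.sin (2*(q+r)))
          - Real.sin (A/2) * Real.sin (B/2) * Real.sin (C/2) *
            (Real.sin (2*(r+t)) * Real.sin (2*(q+t)) * Real.sin (2*(q+r))) := by rw [e]; ring
      _ = _ := by rw [hT1, hT2, hT3, hT4]
  -- the two big identities
  have hI1 : Real.sin (2*(r+t)) * Real.sin (2*(q+t)) * Real.sin (2*(q+r))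
      - (Real.sin (2*(q+r+t)) * Real.sin (2*q) * Real.sin (2*t)
        + Real.sin (2*(q+r+t)) * Real.sin (2*q) * Real.sin (2*r)
        + Real.sin (2*(q+r+t)) * Real.sin (2*r) * Real.sin (2*t)
        - Real.sin (2*q) * Real.sin (2*r) * Real.sin (2*t))
      = 16 * (Real.sin (q+r+t) * Real.sin q * Real.sin r * Real.sin t
          * (Real.sin (r+t) * Real.sin (q+t) * Real.sin (q+r))) := by
    simp only [two_mul, Real.sin_add, Real.cos_add]
    linear_combination ((8)*Real.cos q^2*Real.sin r*Real.cos r^3*Real.sin t^2*Real.cos t^2 + (8)*Real.cos q^2*Real.sin r^2*Real.cos r^2*Real.sin t*Real.cos t^3 + (-8)*Real.cos q^2*Real.sin r^2*Real.cos r^2*Real.sin t^3*Real.cos t + (-8)*Real.cos q^2*Real.sin r^3*Real.cos r*Real.sin t^2*Real.cos t^2 + (-8)*Real.sin q*Real.cos q*Real.cos r^2*Real.sin t^2*Real.cos t^2 + (8)*Real.sin q*Real.cos q*Real.cos r^4*Real.sin t^2*Real.cos t^2 + (-8)*Real.sin q*Real.cos q*Real.sin r*Real.cos r*Real.sin t*Real.cos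 t^3 + (8)*Real.sin q*Real.cos q*Real.sin r*Real.cos r*Real.sin t^3*Real.cos t + (-8)*Real.sin q*Real.cos q*Real.sin r*Real.cos r^3*Real.sin t*Real.cos t + (16)*Real.sin q*Real.cos q*Real.sin r*Real.cos r^3*Real.sin t*Real.cos t^3 + (-16)*Real.sin q*Real.cos q*Real.sin r*Real.cos r^3*Real.sin t^3*Real.cos t + (8)*Real.sin q*Real.cos q*Real.sin r^2*Real.sin t^2*Real.cos t^2 + (-8)*Real.sin q*Real.cos q*Real.sin r^2*Real.cos r^2*Real.cos t^2 + (8)*Real.sin q*Real.cos q*Real.sin r^2*Real.cos r^2*Real.cos t^4 + (8)*Real.sin q*Real.cos q*Real.sin r^2*Real.cos r^2*Real.sin t^2 + (-32)*Real.sin q*Real.cos q*Real.sin r^2*Real.cos r^2*Real.sin t^2*Real.cos t^2 + (-8)*Real.sin q*Real.cos q*Real.sin r^2*Real.cos r^2*Real.sin t^4 + (8)*Real.sin q*Real.cos q*Real.sin r^3*Real.cos r*Real.sin t*Real.cos t + (-16)*Real.sin q*Real.cos q*Real.sin r^3*Real.cos r*Real.sin t*Real.cos t^3 + (-16)*Real.sin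 q*Real.cos q*Real.sin r^3*Real.cos r*Real.sin t^3*Real.cos t + (-8)*Real.sin q*Real.cos q*Real.sin r^4*Real.sin t^2*Real.cos t^2 + (-8)*Real.sin q^2*Real.cos r^2*Real.sin t*Real.cos t^3 + (8)*Real.sin q^2*Real.cos r^2*Real.sin t^3*Real.cos t + (8)*Real.sin q^2*Real.cos r^4*Real.sin t*Real.cos t^3 + (-8)*Real.sin q^2*Real.cos r^4*Real.sin t^3*Real.cos t + (32)*Real.sin q^2*Real.sin r*Real.cos r*Real.sin t^2*Real.cos t^2 + (-8)*Real.sin q^2*Real.sin r*Real.cos r^3*Real.cos t^2 + (8)*Real.sin q^2*Real.sin r*Real.cos r^3*Real.cos t^4 + (8)*Real.sin q^2*Real.sin r*Real.cos r^3*Real.sin t^2 + (-40)*Real.sin q^2*Real.sin r*Real.cos r^3*Real.sin t^2*Real.cos t^2 + (-8)*Real.sin q^2*Real.sin r*Real.cos r^3*Real.sin t^4 + (8)*Real.sin q^2*Real.sin r^2*Real.sin t*Real.cos t^3 + (-8)*Real.sin q^2*Real.sin r^2*Real.sin t^3*Real.cos t + (32)*Real.sin q^2*Real.sin r^2*Real.cos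 r^2*Real.sin t*Real.cos t + (-40)*Real.sin q^2*Real.sin r^2*Real.cos r^2*Real.sin t*Real.cos t^3 + (-24)*Real.sin q^2*Real.sin r^2*Real.cos r^2*Real.sin t^3*Real.cos t + (8)*Real.sin q^2*Real.sin r^3*Real.cos r*Real.cos t^2 + (-8)*Real.sin q^2*Real.sin r^3*Real.cos r*Real.cos t^4 + (-8)*Real.sin q^2*Real.sin r^3*Real.cos r*Real.sin t^2 + (-24)*Real.sin q^2*Real.sin r^3*Real.cos r*Real.sin t^2*Real.cos t^2 + (8)*Real.sin q^2*Real.sin r^3*Real.cos r*Real.sin t^4 + (-8)*Real.sin q^2*Real.sin r^4*Real.sin t*Real.cos t^3 + (8)*Real.sin q^2*Real.sin r^4*Real.sin t^3*Real.cos t) * hpyq + ((8)*Real.sin q*Real.cos q*Real.cos r^2*Real.sin t^2*Real.cos t^2 + (-8)*Real.sin q*Real.cos q*Real.sin r*Real.cos r*Real.sin t*Real.cos t + (8)*Real.sin q*Real.cos q*Real.sin r*Real.cos r*Real.sin t*Real.cos t^3 + (-8)*Real.sin q*Real.cos q*Real.sin r*Real.cos r*Real.sin t^3*Real.cos t + (-8)*Real.sin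 q*Real.cos q*Real.sin r^2*Real.cos t^2 + (8)*Real.sin q*Real.cos q*Real.sin r^2*Real.cos t^4 + (8)*Real.sin q*Real.cos q*Real.sin r^2*Real.sin t^2 + (-8)*Real.sin q*Real.cos q*Real.sin r^2*Real.sin t^2*Real.cos t^2 + (-8)*Real.sin q*Real.cos q*Real.sin r^2*Real.sin t^4 + (8)*Real.sin q^2*Real.cos r^2*Real.sin t*Real.cos t^3 + (-8)*Real.sin q^2*Real.cos r^2*Real.sin t^3*Real.cos t + (-8)*Real.sin q^2*Real.sin r*Real.cos r*Real.cos t^2 + (8)*Real.sin q^2*Real.sin r*Real.cos r*Real.cos t^4 + (8)*Real.sin q^2*Real.sin r*Real.cos r*Real.sin t^2 + (-32)*Real.sin q^2*Real.sin r*Real.cos r*Real.sin t^2*Real.cos t^2 + (-8)*Real.sin q^2*Real.sin r*Real.cos r*Real.sin t^4 + (32)*Real.sin q^2*Real.sin r^2*Real.sin t*Real.cos t + (-40)*Real.sin q^2*Real.sin r^2*Real.sin t*Real.cos t^3 + (-24)*Real.sin q^2*Real.sin r^2*Real.sin t^3*Real.cos t + (-16)*Real.sin q^3*Real.cos q*Real.cos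 r^2*Real.sin t^2*Real.cos t^2 + (16)*Real.sin q^3*Real.cos q*Real.sin r*Real.cos r*Real.sin t*Real.cos t + (-32)*Real.sin q^3*Real.cos q*Real.sin r*Real.cos r*Real.sin t*Real.cos t^3 + (16)*Real.sin q^3*Real.cos q*Real.sin r^2*Real.cos t^2 + (-16)*Real.sin q^3*Real.cos q*Real.sin r^2*Real.cos t^4 + (-16)*Real.sin q^3*Real.cos q*Real.sin r^2*Real.sin t^2 + (16)*Real.sin q^3*Real.cos q*Real.sin r^2*Real.sin t^2*Real.cos t^2 + (16)*Real.sin q^3*Real.cos q*Real.sin r^2*Real.sin t^4 + (-8)*Real.sin q^4*Real.cos r^2*Real.sin t*Real.cos t^3 + (8)*Real.sin q^4*Real.cos r^2*Real.sin t^3*Real.cos t + (8)*Real.sin q^4*Real.sin r*Real.cos r*Real.cos t^2 + (-8)*Real.sin q^4*Real.sin r*Real.cos r*Real.cos t^4 + (-8)*Real.sin q^4*Real.sin r*Real.cos r*Real.sin t^2 + (32)*Real.sin q^4*Real.sin r*Real.cos r*Real.sin t^2*Real.cos t^2 + (8)*Real.sin q^4*Real.sin r*Real.cos r*Real.sin t^4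 + (-32)*Real.sin q^4*Real.sin r^2*Real.sin t*Real.cos t + (40)*Real.sin q^4*Real.sin r^2*Real.sin t*Real.cos t^3 + (24)*Real.sin q^4*Real.sin r^2*Real.sin t^3*Real.cos t) * hpyr + ((8)*Real.sin q*Real.cos q*Real.sin r^2*Real.cos t^2 + (-8)*Real.sin q*Real.cos q*Real.sin r^2*Real.sin t^2 + (-16)*Real.sin q*Real.cos q*Real.sin r^3*Real.cos r*Real.sin t*Real.cos t + (-8)*Real.sin q*Real.cos q*Real.sin r^4*Real.cos t^2 + (8)*Real.sin q*Real.cos q*Real.sin r^4*Real.sin t^2 + (8)*Real.sin q^2*Real.sin r*Real.cos r*Real.cos t^2 + (-8)*Real.sin q^2*Real.sin r*Real.cos r*Real.sin t^2 + (-32)*Real.sin q^2*Real.sin r^2*Real.sin t*Real.cos t + (-16)*Real.sin q^2*Real.sin r^3*Real.cos r*Real.cos t^2 + (16)*Real.sin q^2*Real.sin r^3*Real.cos r*Real.sin t^2 + (32)*Real.sin q^2*Real.sin r^4*Real.sin t*Real.cos t + (-16)*Real.sin q^3*Real.cos q*Real.sin r*Real.cos r*Real.sin t*Real.cos t + (-16)*Real.sin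 q^3*Real.cos q*Real.sin r^2*Real.cos t^2 + (16)*Real.sin q^3*Real.cos q*Real.sin r^2*Real.sin t^2 + (32)*Real.sin q^3*Real.cos q*Real.sin r^3*Real.cos r*Real.sin t*Real.cos t + (16)*Real.sin q^3*Real.cos q*Real.sin r^4*Real.cos t^2 + (-16)*Real.sin q^3*Real.cos q*Real.sin r^4*Real.sin t^2 + (-8)*Real.sin q^4*Real.sin r*Real.cos r*Real.cos t^2 + (8)*Real.sin q^4*Real.sin r*Real.cos r*Real.sin t^2 + (32)*Real.sin q^4*Real.sin r^2*Real.sin t*Real.cos t + (16)*Real.sin q^4*Real.sin r^3*Real.cos r*Real.cos t^2 + (-16)*Real.sin q^4*Real.sin r^3*Real.cos r*Real.sin t^2 + (-32)*Real.sin q^4*Real.sin r^4*Real.sin t*Real.cos t) * hpyt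
  have hI2 : Real.sin (2*(r+t)) * Real.sin (2*(q+t)) * Real.sin (2*(q+r))
      + (Real.sin (2*(q+r+t)) * Real.sin (2*q) * Real.sin (2*t)
        + Real.sin (2*(q+r+t)) * Real.sin (2*q) * Real.sin (2*r)
        + Real.sin (2*(q+r+t)) * Real.sin (2*r) * Real.sin (2*t)
        - Real.sin (2*q) * Real.sin (2*r) * Real.sin (2*t))
      = 16 * (Real.cos (q+r+t) * Real.cos q * Real.cos r * Real.cos t
          * (Real.sin (r+t) * Real.sin (q+t) * Real.sin (q+r))) := by
    simp only [two_mul, Real.sin_add, Real.cos_add]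
    linear_combination ((-8)*Real.cos q^2*Real.sin r*Real.cos r^3*Real.sin t^2*Real.cos t^2 + (-8)*Real.cos q^2*Real.sin r^2*Real.cos r^2*Real.sin t*Real.cos t^3 + (8)*Real.cos q^2*Real.sin r^2*Real.cos r^2*Real.sin t^3*Real.cos t + (8)*Real.cos q^2*Real.sin r^3*Real.cos r*Real.sin t^2*Real.cos t^2 + (8)*Real.sin q*Real.cos q*Real.cos r^2*Real.sin t^2*Real.cos t^2 + (-8)*Real.sin q*Real.cos q*Real.cos r^4*Real.sin t^2*Real.cos t^2 + (8)*Real.sin q*Real.cos q*Real.sin r*Real.cos r*Real.sin t*Real.cos t^3 + (-8)*Real.sin q*Real.cos q*Real.sin r*Real.cos r*Real.sin t^3*Real.cos t + (8)*Real.sin q*Real.cos q*Real.sin r*Real.cos r^3*Real.sin t*Real.cos t + (-16)*Real.sin q*Real.cos q*Real.sin r*Real.cos r^3*Real.sin t*Real.cos t^3 + (16)*Real.sin q*Real.cos q*Real.sin r*Real.cos r^3*Real.sin t^3*Real.cos t + (-8)*Real.sin q*Real.cos q*Real.sin r^2*Real.sin t^2*Real.cos t^2 + (8)*Real.sin q*Real.cos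 q*Real.sin r^2*Real.cos r^2*Real.cos t^2 + (-8)*Real.sin q*Real.cos q*Real.sin r^2*Real.cos r^2*Real.cos t^4 + (-8)*Real.sin q*Real.cos q*Real.sin r^2*Real.cos r^2*Real.sin t^2 + (32)*Real.sin q*Real.cos q*Real.sin r^2*Real.cos r^2*Real.sin t^2*Real.cos t^2 + (8)*Real.sin q*Real.cos q*Real.sin r^2*Real.cos r^2*Real.sin t^4 + (-8)*Real.sin q*Real.cos q*Real.sin r^3*Real.cos r*Real.sin t*Real.cos t + (16)*Real.sin q*Real.cos q*Real.sin r^3*Real.cos r*Real.sin t*Real.cos t^3 + (16)*Real.sin q*Real.cos q*Real.sin r^3*Real.cos r*Real.sin t^3*Real.cos t + (8)*Real.sin q*Real.cos q*Real.sin r^4*Real.sin t^2*Real.cos t^2 + (8)*Real.sin q^2*Real.cos r^2*Real.sin t*Real.cos t^3 + (-8)*Real.sin q^2*Real.cos r^2*Real.sin t^3*Real.cos t + (-8)*Real.sin q^2*Real.cos r^4*Real.sin t*Real.cos t^3 + (8)*Real.sin q^2*Real.cos r^4*Real.sin t^3*Real.cos t + (-32)*Real.sin q^2*Real.sin r*Real.cos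 r*Real.sin t^2*Real.cos t^2 + (8)*Real.sin q^2*Real.sin r*Real.cos r^3*Real.cos t^2 + (-8)*Real.sin q^2*Real.sin r*Real.cos r^3*Real.cos t^4 + (-8)*Real.sin q^2*Real.sin r*Real.cos r^3*Real.sin t^2 + (40)*Real.sin q^2*Real.sin r*Real.cos r^3*Real.sin t^2*Real.cos t^2 + (8)*Real.sin q^2*Real.sin r*Real.cos r^3*Real.sin t^4 + (-8)*Real.sin q^2*Real.sin r^2*Real.sin t*Real.cos t^3 + (8)*Real.sin q^2*Real.sin r^2*Real.sin t^3*Real.cos t + (-32)*Real.sin q^2*Real.sin r^2*Real.cos r^2*Real.sin t*Real.cos t + (40)*Real.sin q^2*Real.sin r^2*Real.cos r^2*Real.sin t*Real.cos t^3 + (24)*Real.sin q^2*Real.sin r^2*Real.cos r^2*Real.sin t^3*Real.cos t + (-8)*Real.sin q^2*Real.sin r^3*Real.cos r*Real.cos t^2 + (8)*Real.sin q^2*Real.sin r^3*Real.cos r*Real.cos t^4 + (8)*Real.sin q^2*Real.sin r^3*Real.cos r*Real.sin t^2 + (24)*Real.sin q^2*Real.sin r^3*Real.cos r*Real.sin t^2*Real.cos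 t^2 + (-8)*Real.sin q^2*Real.sin r^3*Real.cos r*Real.sin t^4 + (8)*Real.sin q^2*Real.sin r^4*Real.sin t*Real.cos t^3 + (-8)*Real.sin q^2*Real.sin r^4*Real.sin t^3*Real.cos t) * hpyq + ((-8)*Real.sin q*Real.cos q*Real.cos r^2*Real.sin t^2*Real.cos t^2 + (8)*Real.sin q*Real.cos q*Real.sin r*Real.cos r*Real.sin t*Real.cos t + (-8)*Real.sin q*Real.cos q*Real.sin r*Real.cos r*Real.sin t*Real.cos t^3 + (8)*Real.sin q*Real.cos q*Real.sin r*Real.cos r*Real.sin t^3*Real.cos t + (8)*Real.sin q*Real.cos q*Real.sin r^2*Real.cos t^2 + (-8)*Real.sin q*Real.cos q*Real.sin r^2*Real.cos t^4 + (-8)*Real.sin q*Real.cos q*Real.sin r^2*Real.sin t^2 + (8)*Real.sin q*Real.cos q*Real.sin r^2*Real.sin t^2*Real.cos t^2 + (8)*Real.sin q*Real.cos q*Real.sin r^2*Real.sin t^4 + (-8)*Real.sin q^2*Real.cos r^2*Real.sin t*Real.cos t^3 + (8)*Real.sin q^2*Real.cos r^2*Real.sin t^3*Real.cos t + (8)*Real.sin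 q^2*Real.sin r*Real.cos r*Real.cos t^2 + (-8)*Real.sin q^2*Real.sin r*Real.cos r*Real.cos t^4 + (-8)*Real.sin q^2*Real.sin r*Real.cos r*Real.sin t^2 + (32)*Real.sin q^2*Real.sin r*Real.cos r*Real.sin t^2*Real.cos t^2 + (8)*Real.sin q^2*Real.sin r*Real.cos r*Real.sin t^4 + (-32)*Real.sin q^2*Real.sin r^2*Real.sin t*Real.cos t + (40)*Real.sin q^2*Real.sin r^2*Real.sin t*Real.cos t^3 + (24)*Real.sin q^2*Real.sin r^2*Real.sin t^3*Real.cos t + (16)*Real.sin q^3*Real.cos q*Real.cos r^2*Real.sin t^2*Real.cos t^2 + (-16)*Real.sin q^3*Real.cos q*Real.sin r*Real.cos r*Real.sin t*Real.cos t + (32)*Real.sin q^3*Real.cos q*Real.sin r*Real.cos r*Real.sin t*Real.cos t^3 + (-16)*Real.sin q^3*Real.cos q*Real.sin r^2*Real.cos t^2 + (16)*Real.sin q^3*Real.cos q*Real.sin r^2*Real.cos t^4 + (16)*Real.sin q^3*Real.cos q*Real.sin r^2*Real.sin t^2 + (-16)*Real.sin q^3*Real.cos q*Real.sin r^2*Real.sin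 t^2*Real.cos t^2 + (-16)*Real.sin q^3*Real.cos q*Real.sin r^2*Real.sin t^4 + (8)*Real.sin q^4*Real.cos r^2*Real.sin t*Real.cos t^3 + (-8)*Real.sin q^4*Real.cos r^2*Real.sin t^3*Real.cos t + (-8)*Real.sin q^4*Real.sin r*Real.cos r*Real.cos t^2 + (8)*Real.sin q^4*Real.sin r*Real.cos r*Real.cos t^4 + (8)*Real.sin q^4*Real.sin r*Real.cos r*Real.sin t^2 + (-32)*Real.sin q^4*Real.sin r*Real.cos r*Real.sin t^2*Real.cos t^2 + (-8)*Real.sin q^4*Real.sin r*Real.cos r*Real.sin t^4 + (32)*Real.sin q^4*Real.sin r^2*Real.sin t*Real.cos t + (-40)*Real.sin q^4*Real.sin r^2*Real.sin t*Real.cos t^3 + (-24)*Real.sin q^4*Real.sin r^2*Real.sin t^3*Real.cos t) * hpyr + ((-8)*Real.sin q*Real.cos q*Real.sin r^2*Real.cos t^2 + (8)*Real.sin q*Real.cos q*Real.sin r^2*Real.sin t^2 + (16)*Real.sin q*Real.cos q*Real.sin r^3*Real.cos r*Real.sin t*Real.cos t + (8)*Real.sin q*Real.cos q*Real.sin r^4*Real.cos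 t^2 + (-8)*Real.sin q*Real.cos q*Real.sin r^4*Real.sin t^2 + (-8)*Real.sin q^2*Real.sin r*Real.cos r*Real.cos t^2 + (8)*Real.sin q^2*Real.sin r*Real.cos r*Real.sin t^2 + (32)*Real.sin q^2*Real.sin r^2*Real.sin t*Real.cos t + (16)*Real.sin q^2*Real.sin r^3*Real.cos r*Real.cos t^2 + (-16)*Real.sin q^2*Real.sin r^3*Real.cos r*Real.sin t^2 + (-32)*Real.sin q^2*Real.sin r^4*Real.sin t*Real.cos t + (16)*Real.sin q^3*Real.cos q*Real.sin r*Real.cos r*Real.sin t*Real.cos t + (16)*Real.sin q^3*Real.cos q*Real.sin r^2*Real.cos t^2 + (-16)*Real.sin q^3*Real.cos q*Real.sin r^2*Real.sin t^2 + (-32)*Real.sin q^3*Real.cos q*Real.sin r^3*Real.cos r*Real.sin t*Real.cos t + (-16)*Real.sin q^3*Real.cos q*Real.sin r^4*Real.cos t^2 + (16)*Real.sin q^3*Real.cos q*Real.sin r^4*Real.sin t^2 + (8)*Real.sin q^4*Real.sin r*Real.cos r*Real.cos t^2 + (-8)*Real.sin q^4*Real.sin r*Real.cos r*Real.sin t^2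 + (-32)*Real.sin q^4*Real.sin r^2*Real.sin t*Real.cos t + (-16)*Real.sin q^4*Real.sin r^3*Real.cos r*Real.cos t^2 + (16)*Real.sin q^4*Real.sin r^3*Real.cos r*Real.sin t^2 + (32)*Real.sin q^4*Real.sin r^4*Real.sin t*Real.cos t) * hpyt
  -- X = sin((A+B+C)/2) = cos((A+B+C-π)/2), and -1 < X
  have hXcos : Real.cos ((A+B+C-π)/2) = Real.sin ((A+B+C)/2) := by
    rw [show (A+B+C-π)/2 = (A+B+C)/2 - π/2 by ring, Real.cos_sub_pi_div_two]
  have hX1 : -1 < Real.sin ((A+B+C)/2) := by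
    rw [← hXcos, ← Real.cos_abs ((A+B+C-π)/2), ← Real.cos_pi]
    apply Real.cos_lt_cos_of_nonneg_of_le_pi (abs_nonneg _) le_rfl
    rw [abs_lt]
    constructor <;> [linarith; linarith]
  have h1X : (0:ℝ) < 1 + Real.sin ((A+B+C)/2) := by linarith
  -- LHS as (1-X)/(1+X)
  have hL : Real.tan ((A+B+C-π)/4)^2
      = (1 - Real.sin ((A+B+C)/2)) / (1 + Real.sin ((A+B+C)/2)) := by
    rw [Real.tan_eq_sin_div_cos, div_pow, show (A+B+C-π)/4 = ((A+B+C-π)/2)/2 by ring,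
      my_sin_sq_half, my_cos_sq_half, hXcos, div_div_div_comm]
    norm_num
  -- RHS as product of sines over product of cosines
  have hR : Real.tan (q+r+t) * Real.tan q * Real.tan r * Real.tan t
      = (Real.sin (q+r+t) * Real.sin q * Real.sin r * Real.sin t)
        / (Real.cos (q+r+t) * Real.cos q * Real.cos r * Real.cos t) := by
    rw [Real.tan_eq_sin_div_cos, Real.tan_eq_sin_div_cos, Real.tan_eq_sin_div_cos,
      Real.tan_eq_sin_div_cos, div_mul_div_comm, div_mul_div_comm, div_mul_div_comm]
  rw [hL, hR]
  rw [div_eq_div_iff h1X.ne' (by positivity)]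
  apply mul_right_cancel₀ hK.ne'
  linear_combination (-(Real.cos (q+r+t) * Real.cos q * Real.cos r * Real.cos t
      + Real.sin (q+r+t) * Real.sin q * Real.sin r * Real.sin t)) * hW
    + (Real.cos (q+r+t) * Real.cos q * Real.cos r * Real.cos t) * hI1
    + (-(Real.sin (q+r+t) * Real.sin q * Real.sin r * Real.sin t)) * hI2

/-- Lhuilier's formula: for a (nondegenerate) spherical triangle contained in an open
hemisphere of the unit sphere, with side lengths `a, b, c`, semiperimeter `s`, and area
`S` equal to the angle excess `α + β + γ - π`, one has
`tan² (S/4) = tan (s/2) · tan ((s-a)/2) · tan ((s-b)/2) · tan ((s-c)/2)`. -/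
theorem lhuilier (u v w : EuclideanSpace ℝ (Fin 3))
    (hu : ‖u‖ = 1) (hv : ‖v‖ = 1) (hw : ‖w‖ = 1)
    (hhemi : ∃ p : EuclideanSpace ℝ (Fin 3), ‖p‖ = 1 ∧
      0 < (inner ℝ p u : ℝ) ∧ 0 < (inner ℝ p v : ℝ) ∧ 0 < (inner ℝ p w : ℝ))
    (a b c s S : ℝ)
    (ha : a = sdist u v) (hb : b = sdist v w) (hc : c = sdist w u)
    (htri₁ : a < b + c) (htri₂ : b < c + a) (htri₃ : c < a + b)
    (hs : s = (a + b + c) / 2)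
    (hS : S = sangle w u v + sangle u v w + sangle v w u - π) :
    Real.tan (S / 4) ^ 2 =
      Real.tan (s / 2) * Real.tan ((s - a) / 2) *
        Real.tan ((s - b) / 2) * Real.tan ((s - c) / 2) := by
  obtain ⟨p, hp1, hpu, hpv, hpw⟩ := hhemi
  have hpi := Real.pi_pos
  -- basic bounds on inner ℝ products
  have hiuv : |(inner ℝ u v : ℝ)| ≤ 1 := by simpa [hu, hv] using abs_real_inner_le_norm u v
  have hivw : |(inner ℝ v w : ℝ)| ≤ 1 := by simpa [hv, hw] using abs_real_inner_le_norm v w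
  have hiwu : |(inner ℝ w u : ℝ)| ≤ 1 := by simpa [hw, hu] using abs_real_inner_le_norm w u
  have hca' : Real.cos a = (inner ℝ u v : ℝ) := by
    rw [ha, sdist]
    exact Real.cos_arccos (by linarith [abs_le.mp hiuv]) (by linarith [abs_le.mp hiuv])
  have hcb' : Real.cos b = (inner ℝ v w : ℝ) := by
    rw [hb, sdist]
    exact Real.cos_arccos (by linarith [abs_le.mp hivw]) (by linarith [abs_le.mp hivw])
  have hcc' : Real.cos c = (inner ℝ w u : ℝ) := by
    rw [hc, sdist]
    exact Real.cos_arccos (by linarith [abs_le.mp hiwu]) (by linarith [abs_le.mp hiwu])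
  have ha0 : 0 ≤ a := ha ▸ Real.arccos_nonneg _
  have hb0 : 0 ≤ b := hb ▸ Real.arccos_nonneg _
  have hc0 : 0 ≤ c := hc ▸ Real.arccos_nonneg _
  have hapi : a ≤ π := ha ▸ Real.arccos_le_pi _
  have hbpi : b ≤ π := hb ▸ Real.arccos_le_pi _
  have hcpi : c ≤ π := hc ▸ Real.arccos_le_pi _
  have hapos : 0 < a := by linarith
  have hbpos : 0 < b := by linarith
  have hcpos : 0 < c := by linarith
  -- strict upper bounds via the hemisphere condition
  have neg_aux : ∀ (x y : EuclideanSpace ℝ (Fin 3)), ‖x‖ = 1 → ‖y‖ = 1 →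
      (inner ℝ x y : ℝ) = -1 → 0 < (inner ℝ p x : ℝ) → 0 < (inner ℝ p y : ℝ) → False := by
    intro x y hx hy hxy hpx hpy
    have hz : ‖x + y‖^2 = 0 := by
      rw [norm_add_sq_real, hx, hy, hxy]; norm_num
    have h0 : x + y = 0 := norm_eq_zero.mp (by
      have := sq_eq_zero_iff.mp hz; exact this)
    have : (inner ℝ p x : ℝ) + (inner ℝ p y : ℝ) = 0 := by
      rw [← inner_add_right, h0, inner_zero_right]
    linarith
  have halt : a < π := by
    rcases lt_or_eq_of_le hapi with h | h
    · exact h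
    · exfalso; exact neg_aux u v hu hv (by rw [← hca', h, Real.cos_pi]) hpu hpv
  have hblt : b < π := by
    rcases lt_or_eq_of_le hbpi with h | h
    · exact h
    · exfalso; exact neg_aux v w hv hw (by rw [← hcb', h, Real.cos_pi]) hpv hpw
  have hclt : c < π := by
    rcases lt_or_eq_of_le hcpi with h | h
    · exact h
    · exfalso; exact neg_aux w u hw hu (by rw [← hcc', h, Real.cos_pi]) hpw hpu
  -- perimeter at most 2π
  have hnu : ‖(-u : EuclideanSpace ℝ (Fin 3))‖ = 1 := by rw [norm_neg]; exact hu
  have e1 : sdist v (-u) = π - a := by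
    rw [sdist, inner_neg_right, real_inner_comm, Real.arccos_neg, ha, sdist]
  have e2 : sdist (-u) w = π - c := by
    rw [sdist, inner_neg_left, real_inner_comm, Real.arccos_neg, hc, sdist]
  have hper : a + b + c ≤ 2*π := by
    have htr := sdist_triangle v (-u) w hv hnu hw
    rw [e1, e2, ← hb] at htr
    linarith
  -- angles in terms of a b c
  have hang1 : sangle w u v = Real.arccos ((Real.cos b - Real.cos c * Real.cos a) /
      (Real.sin c * Real.sin a)) := by
    rw [sangle, sdist_comm w v, sdist_comm u w, ← ha, ← hb, ← hc]
  have hang2 : sangle u v w = Real.arccos ((Real.cos c - Real.cos a * Real.cos b) /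
      (Real.sin a * Real.sin b)) := by
    rw [sangle, sdist_comm u w, sdist_comm v u, ← ha, ← hb, ← hc]
  have hang3 : sangle v w u = Real.arccos ((Real.cos a - Real.cos b * Real.cos c) /
      (Real.sin b * Real.sin c)) := by
    rw [sangle, sdist_comm v u, sdist_comm w v, ← ha, ← hb, ← hc]
  have hsa : 0 < Real.sin a := Real.sin_pos_of_pos_of_lt_pi hapos halt
  have hsb : 0 < Real.sin b := Real.sin_pos_of_pos_of_lt_pi hbpos hblt
  have hsc : 0 < Real.sin c := Real.sin_pos_of_pos_of_lt_pi hcpos hclt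
  rcases eq_or_lt_of_le hper with heq | hlt
  · -- degenerate boundary case: a + b + c = 2π
    have hn1 : Real.cos b - Real.cos c * Real.cos a = -(Real.sin c * Real.sin a) := by
      rw [show b = 2*π - (c + a) by linarith, Real.cos_two_pi_sub, Real.cos_add]; ring
    have hn2 : Real.cos c - Real.cos a * Real.cos b = -(Real.sin a * Real.sin b) := by
      rw [show c = 2*π - (a + b) by linarith, Real.cos_two_pi_sub, Real.cos_add]; ring
    have hn3 : Real.cos a - Real.cos b * Real.cos c = -(Real.sin b * Real.sin c) := by
      rw [show a = 2*π - (b + c) by linarith, Real.cos_two_pi_sub, Real.cos_add]; ring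
    have hg1 : sangle w u v = π := by
      rw [hang1, hn1, neg_div, div_self (by positivity : Real.sin c * Real.sin a ≠ 0)]
      exact Real.arccos_neg_one
    have hg2 : sangle u v w = π := by
      rw [hang2, hn2, neg_div, div_self (by positivity : Real.sin a * Real.sin b ≠ 0)]
      exact Real.arccos_neg_one
    have hg3 : sangle v w u = π := by
      rw [hang3, hn3, neg_div, div_self (by positivity : Real.sin b * Real.sin c ≠ 0)]
      exact Real.arccos_neg_one
    have hS2 : S = 2*π := by rw [hS, hg1, hg2, hg3]; ring
    have hs2 : s = π := by rw [hs]; linarith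
    rw [hS2, hs2, show 2*π/4 = π/2 by ring, Real.tan_pi_div_two]
    ring
  · -- main case
    have key := lhuilier_core ((b+c-a)/4) ((c+a-b)/4) ((a+b-c)/4)
      (sangle w u v) (sangle u v w) (sangle v w u)
      (by linarith) (by linarith) (by linarith) (by linarith)
      (by
        rw [hang1, show 2*((b+c-a)/4+(a+b-c)/4) = b by ring,
          show 2*((b+c-a)/4+(c+a-b)/4) = c by ring,
          show 2*((c+a-b)/4+(a+b-c)/4) = a by ring])
      (by
        rw [hang2, show 2*((b+c-a)/4+(c+a-b)/4) = c by ring,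
          show 2*((c+a-b)/4+(a+b-c)/4) = a by ring,
          show 2*((b+c-a)/4+(a+b-c)/4) = b by ring])
      (by
        rw [hang3, show 2*((c+a-b)/4+(a+b-c)/4) = a by ring,
          show 2*((b+c-a)/4+(a+b-c)/4) = b by ring,
          show 2*((b+c-a)/4+(c+a-b)/4) = c by ring])
    rw [hS, hs,
      show (a+b+c)/2/2 = (b+c-a)/4 + (c+a-b)/4 + (a+b-c)/4 by ring,
      show ((a+b+c)/2 - a)/2 = (b+c-a)/4 by ring,
      show ((a+b+c)/2 - b)/2 = (c+a-b)/4 by ring,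
      show ((a+b+c)/2 - c)/2 = (a+b-c)/4 by ring]
    exact key
end
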